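/- Let E and F be real Banach spaces, μ : F → ℝ a nonzero continuous linear functional, U ⊆ E an open set, and f : U → F a continuously differentiable (C¹) map whose image is contained in the closed half-plane F_μ^+ = {y ∈ F : μ(y) ≥ 0}. If x₀ ∈ U and the derivative Df(x₀) : E → F is surjective, then μ(f(x₀)) > 0. -/

import Mathlib

/-- A C¹ map on an open set whose image lies in the closed half-plane `{μ ≥ 0}` and whose
derivative is surjective at `x₀` must map `x₀` into the open half-plane `{μ > 0}`. -/
theorem pos_of_surjective_fderiv_halfplane {E F : Type*}
    [NormedAddCommGroup E] [NormedSpace ℝ E] [CompleteSpace E]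
    [NormedAddCommGroup F] [NormedSpace ℝ F] [CompleteSpace F]
    (μ : F →L[ℝ] ℝ) (hμ : μ ≠ 0)
    (U : Set E) (hU : IsOpen U)
    (f : E → F) (hf : ContDiffOn ℝ 1 f U)
    (hrange : ∀ x ∈ U, 0 ≤ μ (f x))
    (x₀ : E) (hx₀ : x₀ ∈ U)
    (hsurj : Function.Surjective (fderiv ℝ f x₀)) :
    0 < μ (f x₀) := by
  rcases (hrange x₀ hx₀).lt_or_eq with h | h
  · exact h
  exfalso
  -- find v with μ (Df v) < 0
  obtain ⟨y, hy⟩ : ∃ y, μ y ≠ 0 := by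
    by_contra hcon
    push_neg at hcon
    exact hμ (ContinuousLinearMap.ext fun y => by simpa using hcon y)
  obtain ⟨w, hw⟩ := hsurj y
  obtain ⟨v, hv⟩ : ∃ v, μ (fderiv ℝ f x₀ v) < 0 := by
    rcases hy.lt_or_gt with hlt | hlt
    · exact ⟨w, by rwa [hw]⟩
    · exact ⟨-w, by simp [hw, hlt]⟩
  -- differentiability
  have hdf : DifferentiableAt ℝ f x₀ :=
    (hf.contDiffAt (hU.mem_nhds hx₀)).differentiableAt one_ne_zero
  set φ : ℝ → ℝ := fun t => μ (f (x₀ + t • v)) with hφdef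
  have hcurve : HasDerivAt (fun t : ℝ => x₀ + t • v) v 0 := by
    simpa using ((hasDerivAt_id (0:ℝ)).smul_const v).const_add x₀
  have hφ : HasDerivAt φ (μ (fderiv ℝ f x₀ v)) 0 := by
    have h1 : HasDerivAt (fun t : ℝ => f (x₀ + t • v)) (fderiv ℝ f x₀ v) 0 := by
      have hdf' : HasFDerivAt f (fderiv ℝ f x₀) (x₀ + (0:ℝ) • v) := by
        simpa using hdf.hasFDerivAt
      have := hdf'.comp_hasDerivAt 0 hcurve
      exact this
    have := μ.hasFDerivAt.comp_hasDerivAt 0 h1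
    exact this
  have hslope := hasDerivAt_iff_tendsto_slope.1 hφ
  have hneg : ∀ᶠ t in nhdsWithin (0:ℝ) {(0:ℝ)}ᶜ, slope φ 0 t < 0 :=
    hslope.eventually (Filter.Tendsto.eventually_lt_const hv Filter.tendsto_id)
  have hmem : ∀ᶠ t in nhds (0:ℝ), x₀ + t • v ∈ U := by
    have hc : ContinuousAt (fun t : ℝ => x₀ + t • v) 0 := hcurve.continuousAt
    have := hc.preimage_mem_nhds (by simpa using hU.mem_nhds hx₀)
    exact this
  have hcomb : ∀ᶠ t in nhdsWithin (0:ℝ) (Set.Ioi 0),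
      slope φ 0 t < 0 ∧ x₀ + t • v ∈ U := by
    refine Filter.Eventually.and ?_ ?_
    · exact hneg.filter_mono (nhdsWithin_mono 0 (fun t ht => ne_of_gt ht))
    · exact hmem.filter_mono nhdsWithin_le_nhds
  obtain ⟨t, ht⟩ := (hcomb.and self_mem_nhdsWithin).exists
  obtain ⟨⟨hs, hmemU⟩, htpos⟩ := ht
  have hφ0 : φ 0 = 0 := by simp [hφdef, h.symm]
  have hφt : 0 ≤ φ t := hrange _ hmemU
  have : 0 ≤ slope φ 0 t := by
    have htpos' : (0:ℝ) < t := htpos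
    rw [slope_def_field, hφ0, sub_zero, sub_zero]
    exact div_nonneg hφt htpos'.le
  linarith
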